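/- Let $\delta_{\rm z} \in \mathbb{R}$ with $0 < \delta_{\rm z} < 1$, let $\zeta^*_p, \zeta^*_q \in \mathbb{R}$, let $\varepsilon > 0$, and let $\zeta_0 \in \mathbb{R}$ satisfy $|\zeta_0 - \zeta^*_p| < \varepsilon$. Let $N \in \mathbb{N}$ satisfy $N > \frac{1}{2} \cdot \frac{\log\big(|\zeta^*_p - \zeta^*_q|/\varepsilon + 1\big)}{\log(1/\delta_{\rm z})}$. Define the sequence $\zeta[0] = \zeta_0$ and $\zeta[n+1] = \delta_{\rm z}^2\, \zeta[n] + (1 - \delta_{\rm z}^2)\, \zeta^*_q$ for all $n$. Then $|\zeta[N] - \zeta^*_q| < \varepsilon$. -/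

import Mathlib

/-- Dwell-time proposition: if `|ζ0 - ζ⋆_p| < ε` and the dwell time `N` exceeds
`(1/2) · log(|ζ⋆_p - ζ⋆_q|/ε + 1) / log(1/δz)`, then iterating the affine map
`ζ[n+1] = δz² ζ[n] + (1 - δz²) ζ⋆_q` for `N` steps brings the state within `ε`
of the destination fixed point `ζ⋆_q`. -/
theorem dwell_time_bound
    (δz ζp ζq ε ζ0 : ℝ)
    (hδ0 : 0 < δz) (hδ1 : δz < 1) (hε : 0 < ε)
    (h0 : |ζ0 - ζp| < ε)
    (N : ℕ)
    (hN : (N : ℝ) > (1 / 2) * Real.log (|ζp - ζq| / ε + 1) / Real.log (1 / δz))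
    (ζ : ℕ → ℝ) (hζ0 : ζ 0 = ζ0)
    (hrec : ∀ n : ℕ, ζ (n + 1) = δz ^ 2 * ζ n + (1 - δz ^ 2) * ζq) :
    |ζ N - ζq| < ε := by
  set D := |ζp - ζq| with hD
  have hD0 : 0 ≤ D := abs_nonneg _
  -- closed form
  have key : ∀ n, ζ n - ζq = (δz ^ 2) ^ n * (ζ0 - ζq) := by
    intro n
    induction n with
    | zero => simp [hζ0]
    | succ n ih =>
      rw [hrec n]
      linear_combination (δz ^ 2) * ih
  -- log manipulation
  have hL : 0 < Real.log (1 / δz) := Real.log_pos (by rw [lt_div_iff₀ hδ0]; linarith)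
  have h1 : (1 / 2 : ℝ) * Real.log (D / ε + 1) < N * Real.log (1 / δz) := by
    have := (div_lt_iff₀ hL).mp hN
    linarith
  have h2 : Real.log (D / ε + 1) < Real.log ((1 / δz) ^ (2 * N)) := by
    rw [Real.log_pow]
    push_cast
    linarith
  have hpos : 0 < D / ε + 1 := by positivity
  have h3 : D / ε + 1 < (1 / δz) ^ (2 * N) :=
    (Real.log_lt_log_iff hpos (by positivity)).mp h2
  have hpow : (0:ℝ) < δz ^ (2 * N) := by positivity
  have h4 : δz ^ (2 * N) * (ε + D) < ε := by
    rw [one_div, inv_pow] at h3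
    rw [lt_inv_comm₀ hpos hpow] at h3
    have : δz ^ (2 * N) * (D / ε + 1) < 1 := by
      calc δz ^ (2 * N) * (D / ε + 1) < (D / ε + 1)⁻¹ * (D / ε + 1) := by
            exact mul_lt_mul_of_pos_right h3 hpos
        _ = 1 := inv_mul_cancel₀ (ne_of_gt hpos)
    have heq : (D / ε + 1) * ε = ε + D := by field_simp; ring
    nlinarith [mul_lt_mul_of_pos_right this hε, heq]
  have h6 : |ζ0 - ζq| < ε + D := by
    calc |ζ0 - ζq| ≤ |ζ0 - ζp| + |ζp - ζq| := abs_sub_le _ _ _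
      _ < ε + D := by rw [hD]; linarith
  rw [key N, abs_mul, abs_pow, abs_of_pos (by positivity : (0:ℝ) < δz ^ 2),
    ← pow_mul]
  calc δz ^ (2 * N) * |ζ0 - ζq| ≤ δz ^ (2 * N) * (ε + D) :=
        mul_le_mul_of_nonneg_left h6.le hpow.le
    _ < ε := h4
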